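/- Let k, m be positive integers with m ≥ 1 and let φ(τ,z₁,z₂) = Σ_{α,β ≥ 0} χ_{α,β}(τ) z₁^α z₂^β be holomorphic on ℍ × ℂ² with φ|_{k,m} M = φ for all M ∈ SL(2,ℤ). Then the diagonal part φ₀(τ,z₁,z₂) = Σ_{ν ≥ 0} χ_{ν,ν}(τ) (z₁z₂)^ν also satisfies φ₀|_{k,m} M = φ₀ for all M ∈ SL(2,ℤ); in particular, χ_{0,0} is a modular form of weight k for SL(2,ℤ). -/

import Mathlib

open Complex

open Filter Finset Topology

lemma geom_avg (N : ℕ) (u : ℂ) (hu : u ^ N = 1) :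
    ∑ i ∈ Finset.range N, u ^ i = if u = 1 then (N : ℂ) else 0 := by
  split_ifs with h
  · simp [h]
  · rw [geom_sum_eq h, hu]; simp

lemma exp_div_eq_one_iff (N : ℕ) (hN : 0 < N) (n : ℤ) :
    Complex.exp ((n : ℂ) * (2 * Real.pi * Complex.I / N)) = 1 ↔ (N : ℤ) ∣ n := by
  have hN0 : (N : ℂ) ≠ 0 := Nat.cast_ne_zero.mpr hN.ne'
  have h2 : (2 : ℂ) * (Real.pi : ℂ) * Complex.I ≠ 0 := by
    simp [Real.pi_ne_zero, Complex.I_ne_zero]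
  rw [Complex.exp_eq_one_iff]
  constructor
  · rintro ⟨t, ht⟩
    have : (n : ℂ) = t * N := by
      field_simp at ht
      apply mul_left_cancel₀ h2
      linear_combination (2 * (Real.pi : ℂ) * Complex.I) * ht
    have h3 : n = t * N := by exact_mod_cast this
    exact ⟨t, by rw [h3]; ring⟩
  · rintro ⟨t, rfl⟩
    refine ⟨t, ?_⟩
    push_cast
    field_simp

lemma avg_eq (χ : ℕ → ℕ → ℂ → ℂ) (φ : ℂ → ℂ → ℂ → ℂ)
    (hφ : ∀ τ z₁ z₂ : ℂ, 0 < τ.im →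
      HasSum (fun p : ℕ × ℕ => χ p.1 p.2 τ * z₁ ^ p.1 * z₂ ^ p.2) (φ τ z₁ z₂))
    (τ z w : ℂ) (hτ : 0 < τ.im) (N : ℕ) (hN : 0 < N) :
    HasSum (fun p : ℕ × ℕ =>
        if (N : ℤ) ∣ ((p.1 : ℤ) - p.2) then χ p.1 p.2 τ * z ^ p.1 * w ^ p.2 else 0)
      ((N : ℂ)⁻¹ * ∑ i ∈ Finset.range N,
        φ τ (Complex.exp (2 * Real.pi * Complex.I / N) ^ i * z)
          ((Complex.exp (2 * Real.pi * Complex.I / N) ^ i)⁻¹ * w)) := by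
  have hN0 : (N : ℂ) ≠ 0 := Nat.cast_ne_zero.mpr hN.ne'
  set θ : ℂ := 2 * Real.pi * Complex.I / N with hθ
  have hNθ : (N : ℂ) * θ = 2 * Real.pi * Complex.I := by
    rw [hθ]; field_simp
  have key : ∀ i ∈ Finset.range N,
      HasSum (fun p : ℕ × ℕ =>
        (χ p.1 p.2 τ * z ^ p.1 * w ^ p.2) *
          Complex.exp ((((p.1 : ℤ) - p.2 : ℤ) : ℂ) * θ) ^ i)
        (φ τ (Complex.exp θ ^ i * z) ((Complex.exp θ ^ i)⁻¹ * w)) := by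
    intro i _
    have h := hφ τ (Complex.exp θ ^ i * z) ((Complex.exp θ ^ i)⁻¹ * w) hτ
    convert h using 1
    funext p
    obtain ⟨α, β⟩ := p
    simp only
    rw [← Complex.exp_nat_mul θ i, ← Complex.exp_neg, mul_pow, mul_pow,
      ← Complex.exp_nat_mul, ← Complex.exp_nat_mul, ← Complex.exp_nat_mul]
    rw [show ((i : ℂ)) * ((((α : ℤ) - β : ℤ) : ℂ) * θ)
        = (α : ℂ) * ((i : ℂ) * θ) + (β : ℂ) * (-((i : ℂ) * θ)) by push_cast; ring,
      Complex.exp_add]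
    ring
  have hsum := (hasSum_sum key).mul_left ((N : ℂ)⁻¹)
  have hfun : (fun p : ℕ × ℕ =>
      if (N : ℤ) ∣ ((p.1 : ℤ) - p.2) then χ p.1 p.2 τ * z ^ p.1 * w ^ p.2 else 0)
      = fun p : ℕ × ℕ => (N : ℂ)⁻¹ * ∑ i ∈ Finset.range N,
          (χ p.1 p.2 τ * z ^ p.1 * w ^ p.2) *
            Complex.exp ((((p.1 : ℤ) - p.2 : ℤ) : ℂ) * θ) ^ i := by
    funext p
    obtain ⟨α, β⟩ := p
    simp only
    set n : ℤ := (α : ℤ) - β with hn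
    set u : ℂ := Complex.exp ((n : ℂ) * θ) with hu
    have huN : u ^ N = 1 := by
      rw [hu, ← Complex.exp_nat_mul,
        show (N : ℂ) * ((n : ℂ) * θ) = (n : ℂ) * ((N : ℂ) * θ) by ring, hNθ]
      exact Complex.exp_int_mul_two_pi_mul_I n
    rw [← Finset.mul_sum, geom_avg N u huN]
    by_cases hd : (N : ℤ) ∣ n
    · have hu1 : u = 1 := by
        rw [hu, exp_div_eq_one_iff N hN n]; exact hd
      rw [if_pos hd, if_pos hu1]
      field_simp
    · have hu1 : u ≠ 1 := fun h => hd ((exp_div_eq_one_iff N hN n).mp (hu ▸ h))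
      rw [if_neg hd, if_neg hu1]
      simp
  rw [hfun]
  exact hsum

lemma avg_tendsto (χ : ℕ → ℕ → ℂ → ℂ) (φ : ℂ → ℂ → ℂ → ℂ)
    (hφ : ∀ τ z₁ z₂ : ℂ, 0 < τ.im →
      HasSum (fun p : ℕ × ℕ => χ p.1 p.2 τ * z₁ ^ p.1 * z₂ ^ p.2) (φ τ z₁ z₂))
    (τ z w : ℂ) (hτ : 0 < τ.im) :
    Tendsto (fun N : ℕ => (N : ℂ)⁻¹ * ∑ i ∈ Finset.range N,
        φ τ (Complex.exp (2 * Real.pi * Complex.I / N) ^ i * z)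
          ((Complex.exp (2 * Real.pi * Complex.I / N) ^ i)⁻¹ * w)) atTop
      (𝓝 (∑' ν : ℕ, χ ν ν τ * (z * w) ^ ν)) := by
  set f : ℕ × ℕ → ℂ := fun p => χ p.1 p.2 τ * z ^ p.1 * w ^ p.2 with hf
  have hfs : Summable f := (hφ τ z w hτ).summable
  have hfn : Summable (fun p => ‖f p‖) := hfs.norm
  have hlim : Tendsto (fun N : ℕ => ∑' p : ℕ × ℕ,
        (if (N : ℤ) ∣ ((p.1 : ℤ) - p.2) then f p else 0)) atTop
      (𝓝 (∑' p : ℕ × ℕ, (if p.1 = p.2 then f p else 0))) := by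
    apply tendsto_tsum_of_dominated_convergence hfn
    · intro p
      by_cases h : p.1 = p.2
      · have : ∀ N : ℕ, (if (N : ℤ) ∣ ((p.1 : ℤ) - p.2) then f p else 0) = f p := by
          intro N; rw [if_pos]; rw [h]; simp
        simp only [this, if_pos h]
        exact tendsto_const_nhds
      · have hn0 : ((p.1 : ℤ) - p.2) ≠ 0 := by
          intro hc
          exact h (by exact_mod_cast sub_eq_zero.mp hc)
        simp only [if_neg h]
        refine Tendsto.congr' ?_ tendsto_const_nhds
        filter_upwards [eventually_gt_atTop ((p.1 : ℤ) - p.2).natAbs] with N hNgt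
        rw [if_neg]
        intro hd
        have hle : (N : ℤ) ≤ |((p.1 : ℤ) - p.2)| :=
          Int.le_of_dvd (abs_pos.mpr hn0) ((dvd_abs _ _).mpr hd)
        rw [Int.abs_eq_natAbs] at hle
        omega
    · filter_upwards with N
      intro p
      split_ifs <;> simp
  have hdiag : (∑' p : ℕ × ℕ, (if p.1 = p.2 then f p else 0))
      = ∑' ν : ℕ, χ ν ν τ * (z * w) ^ ν := by
    have hinj : Function.Injective (fun ν : ℕ => ((ν, ν) : ℕ × ℕ)) := by
      intro a b hab
      simpa using congrArg Prod.fst hab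
    have hsupp : Function.support (fun p : ℕ × ℕ => if p.1 = p.2 then f p else 0)
        ⊆ Set.range (fun ν : ℕ => ((ν, ν) : ℕ × ℕ)) := by
      intro p hp
      by_cases h : p.1 = p.2
      · exact ⟨p.1, by ext <;> simp [h]⟩
      · simp [h] at hp
    rw [← hinj.tsum_eq hsupp]
    apply tsum_congr
    intro ν
    simp only [hf, mul_pow, if_true, reduceIte]
    ring
  rw [hdiag] at hlim
  refine hlim.congr' ?_
  filter_upwards [eventually_gt_atTop 0] with N hN
  exact (avg_eq χ φ hφ τ z w hτ N hN).tsum_eq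

lemma denom_ne_zero' (M : Matrix.SpecialLinearGroup (Fin 2) ℤ) (τ : ℂ) (hτ : 0 < τ.im) :
    ((M 1 0 : ℤ) : ℂ) * τ + ((M 1 1 : ℤ) : ℂ) ≠ 0 := by
  intro h
  have hdet : (M 0 0 : ℤ) * (M 1 1 : ℤ) - (M 0 1 : ℤ) * (M 1 0 : ℤ) = 1 := by
    have h2 := M.2
    rw [Matrix.det_fin_two] at h2
    exact h2
  have him := congrArg Complex.im h
  simp only [Complex.add_im, Complex.mul_im, Complex.intCast_im, Complex.intCast_re,
    Complex.zero_im, zero_mul, add_zero, mul_zero] at him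
  have hc : ((M 1 0 : ℤ) : ℝ) = 0 := by
    rcases mul_eq_zero.mp him with h' | h'
    · exact h'
    · exact absurd h' hτ.ne'
  have hcZ : (M 1 0 : ℤ) = 0 := by exact_mod_cast hc
  have hre := congrArg Complex.re h
  simp only [Complex.add_re, Complex.mul_re, Complex.intCast_im, Complex.intCast_re,
    Complex.zero_re, zero_mul, sub_zero, zero_add, hcZ, Int.cast_zero] at hre
  have hdZ : (M 1 1 : ℤ) = 0 := by exact_mod_cast hre
  rw [hcZ, hdZ] at hdet
  simp at hdet

lemma im_moebius_pos (M : Matrix.SpecialLinearGroup (Fin 2) ℤ) (τ : ℂ) (hτ : 0 < τ.im) :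
    0 < ((((M 0 0 : ℤ) : ℂ) * τ + ((M 0 1 : ℤ) : ℂ)) /
        (((M 1 0 : ℤ) : ℂ) * τ + ((M 1 1 : ℤ) : ℂ))).im := by
  have hj := denom_ne_zero' M τ hτ
  have hdet : ((M 0 0 : ℤ) : ℝ) * ((M 1 1 : ℤ) : ℝ) - ((M 0 1 : ℤ) : ℝ) * ((M 1 0 : ℤ) : ℝ)
      = 1 := by
    have h2 := M.2
    rw [Matrix.det_fin_two] at h2
    exact_mod_cast h2
  have key : ((((M 0 0 : ℤ) : ℂ) * τ + ((M 0 1 : ℤ) : ℂ)) /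
      (((M 1 0 : ℤ) : ℂ) * τ + ((M 1 1 : ℤ) : ℂ))).im
      = τ.im / Complex.normSq (((M 1 0 : ℤ) : ℂ) * τ + ((M 1 1 : ℤ) : ℂ)) := by
    rw [Complex.div_im, div_sub_div_same]
    congr 1
    simp only [Complex.add_im, Complex.add_re, Complex.mul_im, Complex.mul_re,
      Complex.intCast_im, Complex.intCast_re, zero_mul, mul_zero, add_zero, sub_zero]
    linear_combination τ.im * hdet
  rw [key]
  exact div_pos hτ (Complex.normSq_pos.mpr hj)

noncomputable def hermSlashZ (k m : ℤ) (M : Matrix.SpecialLinearGroup (Fin 2) ℤ)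
    (φ : ℂ → ℂ → ℂ → ℂ) : ℂ → ℂ → ℂ → ℂ :=
  fun τ z₁ z₂ =>
    ((M 1 0 : ℤ) * τ + (M 1 1 : ℤ)) ^ (-k) *
      Complex.exp (-2 * Real.pi * Complex.I * m * (M 1 0 : ℤ) * z₁ * z₂ /
        ((M 1 0 : ℤ) * τ + (M 1 1 : ℤ))) *
      φ (((M 0 0 : ℤ) * τ + (M 0 1 : ℤ)) / ((M 1 0 : ℤ) * τ + (M 1 1 : ℤ)))
        (z₁ / ((M 1 0 : ℤ) * τ + (M 1 1 : ℤ)))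
        (z₂ / ((M 1 0 : ℤ) * τ + (M 1 1 : ℤ)))

theorem diagonal_part_invariant (k m : ℕ) (hk : 0 < k) (hm : 1 ≤ m)
    (χ : ℕ → ℕ → ℂ → ℂ) (φ : ℂ → ℂ → ℂ → ℂ)
    (hφ : ∀ τ z₁ z₂ : ℂ, 0 < τ.im →
      HasSum (fun p : ℕ × ℕ => χ p.1 p.2 τ * z₁ ^ p.1 * z₂ ^ p.2) (φ τ z₁ z₂))
    (hinv : ∀ M : Matrix.SpecialLinearGroup (Fin 2) ℤ,
      ∀ τ z₁ z₂ : ℂ, 0 < τ.im → hermSlashZ k m M φ τ z₁ z₂ = φ τ z₁ z₂) :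
    (∀ M : Matrix.SpecialLinearGroup (Fin 2) ℤ, ∀ τ z₁ z₂ : ℂ, 0 < τ.im →
      hermSlashZ k m M (fun τ' z₁' z₂' => ∑' ν : ℕ, χ ν ν τ' * (z₁' * z₂') ^ ν) τ z₁ z₂ =
        ∑' ν : ℕ, χ ν ν τ * (z₁ * z₂) ^ ν) ∧
    (∀ M : Matrix.SpecialLinearGroup (Fin 2) ℤ, ∀ τ : ℂ, 0 < τ.im →
      χ 0 0 (((M 0 0 : ℤ) * τ + (M 0 1 : ℤ)) / ((M 1 0 : ℤ) * τ + (M 1 1 : ℤ))) =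
        ((M 1 0 : ℤ) * τ + (M 1 1 : ℤ)) ^ (k : ℕ) * χ 0 0 τ) := by
  have main : ∀ M : Matrix.SpecialLinearGroup (Fin 2) ℤ, ∀ τ z₁ z₂ : ℂ, 0 < τ.im →
      hermSlashZ k m M (fun τ' z₁' z₂' => ∑' ν : ℕ, χ ν ν τ' * (z₁' * z₂') ^ ν) τ z₁ z₂ =
        ∑' ν : ℕ, χ ν ν τ * (z₁ * z₂) ^ ν := by
    intro M τ z₁ z₂ hτ
    have hj : ((M 1 0 : ℤ) : ℂ) * τ + ((M 1 1 : ℤ) : ℂ) ≠ 0 := denom_ne_zero' M τ hτ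
    set j : ℂ := ((M 1 0 : ℤ) : ℂ) * τ + ((M 1 1 : ℤ) : ℂ) with hjdef
    set τM : ℂ := (((M 0 0 : ℤ) : ℂ) * τ + ((M 0 1 : ℤ) : ℂ)) / j with hτMdef
    have hτM : 0 < τM.im := im_moebius_pos M τ hτ
    set C : ℂ := j ^ (-(k : ℤ)) *
      Complex.exp (-2 * Real.pi * Complex.I * ((m : ℤ) : ℂ) * ((M 1 0 : ℤ) : ℂ) * z₁ * z₂ / j)
      with hC
    have h1 := avg_tendsto χ φ hφ τ z₁ z₂ hτ
    have h2 := (avg_tendsto χ φ hφ τM (z₁ / j) (z₂ / j) hτM).const_mul C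
    have heq : ∀ N : ℕ,
        C * ((N : ℂ)⁻¹ * ∑ i ∈ Finset.range N,
          φ τM (Complex.exp (2 * Real.pi * Complex.I / N) ^ i * (z₁ / j))
            ((Complex.exp (2 * Real.pi * Complex.I / N) ^ i)⁻¹ * (z₂ / j)))
        = (N : ℂ)⁻¹ * ∑ i ∈ Finset.range N,
          φ τ (Complex.exp (2 * Real.pi * Complex.I / N) ^ i * z₁)
            ((Complex.exp (2 * Real.pi * Complex.I / N) ^ i)⁻¹ * z₂) := by
      intro N
      set ζ : ℂ := Complex.exp (2 * Real.pi * Complex.I / N) with hζ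
      have hterm : ∀ i : ℕ,
          C * φ τM (ζ ^ i * (z₁ / j)) ((ζ ^ i)⁻¹ * (z₂ / j))
            = φ τ (ζ ^ i * z₁) ((ζ ^ i)⁻¹ * z₂) := by
        intro i
        have hz : (ζ ^ i) ≠ 0 := pow_ne_zero _ (Complex.exp_ne_zero _)
        have h := hinv M τ (ζ ^ i * z₁) ((ζ ^ i)⁻¹ * z₂) hτ
        simp only [hermSlashZ] at h
        rw [show -2 * (Real.pi : ℂ) * Complex.I * ((m : ℤ) : ℂ) * ((M 1 0 : ℤ) : ℂ) *
              (ζ ^ i * z₁) * ((ζ ^ i)⁻¹ * z₂)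
            = -2 * Real.pi * Complex.I * ((m : ℤ) : ℂ) * ((M 1 0 : ℤ) : ℂ) * z₁ * z₂ by
          field_simp] at h
        rw [show ζ ^ i * z₁ / j = ζ ^ i * (z₁ / j) by ring,
          show (ζ ^ i)⁻¹ * z₂ / j = (ζ ^ i)⁻¹ * (z₂ / j) by ring] at h
        rw [← hjdef, ← hτMdef] at h
        rw [hC]
        exact h
      rw [mul_left_comm, Finset.mul_sum]
      congr 1
      exact Finset.sum_congr rfl fun i _ => hterm i
    have h2' : Tendsto (fun N : ℕ => (N : ℂ)⁻¹ * ∑ i ∈ Finset.range N,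
          φ τ (Complex.exp (2 * Real.pi * Complex.I / N) ^ i * z₁)
            ((Complex.exp (2 * Real.pi * Complex.I / N) ^ i)⁻¹ * z₂)) atTop
        (𝓝 (C * ∑' ν : ℕ, χ ν ν τM * (z₁ / j * (z₂ / j)) ^ ν)) := by
      refine h2.congr fun N => heq N
    have hfinal := tendsto_nhds_unique h2' h1
    simp only [hermSlashZ]
    rw [← hjdef, ← hτMdef, ← hfinal, hC]
  refine ⟨main, ?_⟩
  intro M τ hτ
  have hj : ((M 1 0 : ℤ) : ℂ) * τ + ((M 1 1 : ℤ) : ℂ) ≠ 0 := denom_ne_zero' M τ hτ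
  have h := main M τ 0 0 hτ
  simp only [hermSlashZ, mul_zero, zero_mul, zero_div, Complex.exp_zero, mul_one] at h
  rw [tsum_eq_single 0 (by intro ν hν; simp [zero_pow hν]),
    tsum_eq_single 0 (by intro ν hν; simp [zero_pow hν])] at h
  simp only [pow_zero, mul_one] at h
  rw [← h, ← mul_assoc, ← zpow_natCast
      (((M 1 0 : ℤ) : ℂ) * τ + ((M 1 1 : ℤ) : ℂ)) k, ← zpow_add₀ hj]
  simp
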